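/- (Approximation of the residual.) Let Φ be an m×d real matrix satisfying the restricted isometry condition with parameters (2s, ε), where 0 < ε ≤ 0.03. Let x ∈ ℝ^d be a nonzero s-sparse vector with measurements u = Φx, and let I ⊆ {1,…,d} be an index set with |supp(x) ∪ I| ≤ 2s. Define x₀ = x|_{supp(x)∖I}, u₀ = Φx₀, F = range(Φ_I), and let r = P_{F⊥}(u) be the orthogonal projection of u onto the orthogonal complement of F in ℝ^m. Then ‖u₀ − r‖₂ ≤ 2.2 ε ‖u₀‖₂. -/

import Mathlib

open scoped RealInnerProductSpace

noncomputable def l2 {ι : Type*} [Fintype ι] (v : ι → ℝ) : ℝ :=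
  Real.sqrt (∑ i, (v i) ^ 2)

def Sparse {d : ℕ} (s : ℕ) (v : Fin d → ℝ) : Prop :=
  {i | v i ≠ 0}.ncard ≤ s

def RIC {m d : ℕ} (Φ : Matrix (Fin m) (Fin d) ℝ) (r : ℕ) (ε : ℝ) : Prop :=
  ∀ v : Fin d → ℝ, Sparse r v →
    (1 - ε) * l2 v ≤ l2 (Φ.mulVec v) ∧ l2 (Φ.mulVec v) ≤ (1 + ε) * l2 v

noncomputable def colSpan {m d : ℕ} (Φ : Matrix (Fin m) (Fin d) ℝ) (I : Finset (Fin d)) :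
    Submodule ℝ (EuclideanSpace ℝ (Fin m)) :=
  Submodule.span ℝ ((fun i => (WithLp.toLp 2 (fun j => Φ j i) : EuclideanSpace ℝ (Fin m))) '' ↑I)

/-- Explicit cast from plain vectors to Euclidean space. -/
def toE {k : ℕ} (v : Fin k → ℝ) : EuclideanSpace ℝ (Fin k) := WithLp.toLp 2 v

lemma toE_add {k : ℕ} (v w : Fin k → ℝ) : toE (v + w) = toE v + toE w := rfl
lemma toE_sub {k : ℕ} (v w : Fin k → ℝ) : toE (v - w) = toE v - toE w := rfl
lemma toE_smul {k : ℕ} (t : ℝ) (v : Fin k → ℝ) : toE (t • v) = t • toE v := rfl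
lemma toE_zero {k : ℕ} : toE (0 : Fin k → ℝ) = 0 := rfl

lemma l2_eq_norm {k : ℕ} (v : Fin k → ℝ) : l2 v = ‖toE v‖ := by
  rw [EuclideanSpace.norm_eq, l2]
  congr 1
  exact Finset.sum_congr rfl fun i _ => by rw [Real.norm_eq_abs, sq_abs]; rfl

lemma l2_nonneg {ι : Type*} [Fintype ι] (v : ι → ℝ) : 0 ≤ l2 v := Real.sqrt_nonneg _

lemma l2_sq {ι : Type*} [Fintype ι] (v : ι → ℝ) : l2 v ^ 2 = ∑ i, (v i) ^ 2 :=
  Real.sq_sqrt (Finset.sum_nonneg fun _ _ => sq_nonneg _)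

lemma l2_eq_zero {ι : Type*} [Fintype ι] {v : ι → ℝ} (h : l2 v = 0) : v = 0 := by
  have h2 : ∑ i, (v i) ^ 2 = 0 := by
    have := l2_sq v; rw [h] at this; simpa using this.symm
  funext i
  have := (Finset.sum_eq_zero_iff_of_nonneg (fun i _ => sq_nonneg (v i))).mp h2 i
    (Finset.mem_univ i)
  exact pow_eq_zero_iff (by norm_num) |>.mp this

lemma l2_smul {ι : Type*} [Fintype ι] (t : ℝ) (ht : 0 ≤ t) (v : ι → ℝ) :
    l2 (t • v) = t * l2 v := by
  unfold l2
  have : ∑ i, ((t • v) i) ^ 2 = t ^ 2 * ∑ i, (v i) ^ 2 := by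
    rw [Finset.mul_sum]; exact Finset.sum_congr rfl fun i _ => by simp [mul_pow]
  rw [this, Real.sqrt_mul (sq_nonneg t), Real.sqrt_sq ht]

lemma l2_add_sq {ι : Type*} [Fintype ι] {a b : ι → ℝ} (h : ∀ i, a i * b i = 0) :
    l2 (a + b) ^ 2 = l2 a ^ 2 + l2 b ^ 2 := by
  rw [l2_sq, l2_sq, l2_sq, ← Finset.sum_add_distrib]
  exact Finset.sum_congr rfl fun i _ => by simp only [Pi.add_apply]; nlinarith [h i]

lemma l2_sub_sq {ι : Type*} [Fintype ι] {a b : ι → ℝ} (h : ∀ i, a i * b i = 0) :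
    l2 (a - b) ^ 2 = l2 a ^ 2 + l2 b ^ 2 := by
  rw [l2_sq, l2_sq, l2_sq, ← Finset.sum_add_distrib]
  exact Finset.sum_congr rfl fun i _ => by simp only [Pi.sub_apply]; nlinarith [h i]

lemma sparse_of_subset {d s : ℕ} {A : Set (Fin d)} {v : Fin d → ℝ}
    (h : ∀ i, v i ≠ 0 → i ∈ A) (hA : A.ncard ≤ s) : Sparse s v :=
  le_trans (Set.ncard_le_ncard h (Set.toFinite A)) hA

lemma mulVec_mem_colSpan {m d : ℕ} (Φ : Matrix (Fin m) (Fin d) ℝ) (I : Finset (Fin d))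
    (w : Fin d → ℝ) (hw : ∀ i ∉ I, w i = 0) :
    toE (Φ.mulVec w) ∈ colSpan Φ I := by
  have hrep : toE (Φ.mulVec w) =
      ∑ i ∈ I, w i • (WithLp.toLp 2 (fun j => Φ j i) : EuclideanSpace ℝ (Fin m)) := by
    ext j
    have : (∑ i ∈ I, w i • (WithLp.toLp 2 (fun j => Φ j i) : EuclideanSpace ℝ (Fin m))) j
        = ∑ i ∈ I, w i * Φ j i := by
      rw [WithLp.ofLp_sum, Finset.sum_apply]; rfl
    rw [this]
    show Φ.mulVec w j = _
    rw [Matrix.mulVec, dotProduct]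
    rw [← Finset.sum_subset (Finset.subset_univ I)
      (fun i _ hi => by rw [hw i hi, mul_zero])]
    exact Finset.sum_congr rfl fun i _ => mul_comm _ _
  rw [hrep]
  exact Submodule.sum_mem _ fun i hi => Submodule.smul_mem _ _
    (Submodule.subset_span ⟨i, hi, rfl⟩)

lemma exists_of_mem_colSpan {m d : ℕ} (Φ : Matrix (Fin m) (Fin d) ℝ) (I : Finset (Fin d))
    {y : EuclideanSpace ℝ (Fin m)} (hy : y ∈ colSpan Φ I) :
    ∃ w : Fin d → ℝ, (∀ i ∉ I, w i = 0) ∧ toE (Φ.mulVec w) = y := by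
  induction hy using Submodule.span_induction with
  | mem z hz =>
      obtain ⟨i, hi, rfl⟩ := hz
      refine ⟨Pi.single i 1, fun k hk => ?_, ?_⟩
      · exact Pi.single_eq_of_ne (fun h : k = i => hk (h ▸ hi)) 1
      · ext j; show Φ.mulVec (Pi.single i 1) j = Φ j i; simp [Matrix.mulVec_single]
  | zero => exact ⟨0, fun _ _ => rfl, by rw [Matrix.mulVec_zero, toE_zero]⟩
  | add z₁ z₂ h₁ h₂ ih₁ ih₂ =>
      obtain ⟨w₁, hw₁, rfl⟩ := ih₁
      obtain ⟨w₂, hw₂, rfl⟩ := ih₂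
      exact ⟨w₁ + w₂, fun i hi => by simp [hw₁ i hi, hw₂ i hi],
        by rw [Matrix.mulVec_add, toE_add]⟩
  | smul c z h ih =>
      obtain ⟨w, hw, rfl⟩ := ih
      exact ⟨c • w, fun i hi => by simp [hw i hi],
        by rw [Matrix.mulVec_smul, toE_smul]⟩

lemma inner_le_part1 {m d s : ℕ} {ε : ℝ} (hε0 : 0 < ε) (hε1 : ε ≤ 1)
    {Φ : Matrix (Fin m) (Fin d) ℝ} (hΦ : RIC Φ (2 * s) ε)
    {a b : Fin d → ℝ} (hab : ∀ i, a i * b i = 0)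
    (hs : ({i | a i ≠ 0} ∪ {i | b i ≠ 0}).ncard ≤ 2 * s) :
    ⟪toE (Φ.mulVec a), toE (Φ.mulVec b)⟫ ≤ ε * (l2 a ^ 2 + l2 b ^ 2) := by
  have hsubP : Sparse (2 * s) (a + b) := by
    refine sparse_of_subset (fun i hi => ?_) hs
    by_contra hc
    simp only [Set.mem_union, Set.mem_setOf_eq, not_or, not_not] at hc
    exact hi (by simp [Pi.add_apply, hc.1, hc.2])
  have hsubM : Sparse (2 * s) (a - b) := by
    refine sparse_of_subset (fun i hi => ?_) hs
    by_contra hc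
    simp only [Set.mem_union, Set.mem_setOf_eq, not_or, not_not] at hc
    exact hi (by simp [Pi.sub_apply, hc.1, hc.2])
  have h1 := (hΦ (a + b) hsubP).2
  have h2 := (hΦ (a - b) hsubM).1
  have e1 : l2 (Φ.mulVec (a + b)) = ‖toE (Φ.mulVec a) + toE (Φ.mulVec b)‖ := by
    rw [l2_eq_norm, Matrix.mulVec_add, toE_add]
  have e2 : l2 (Φ.mulVec (a - b)) = ‖toE (Φ.mulVec a) - toE (Φ.mulVec b)‖ := by
    rw [l2_eq_norm, Matrix.mulVec_sub, toE_sub]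
  rw [e1] at h1; rw [e2] at h2
  have key := re_inner_eq_norm_add_mul_self_sub_norm_sub_mul_self_div_four
    (𝕜 := ℝ) (toE (Φ.mulVec a)) (toE (Φ.mulVec b))
  simp only [RCLike.re_to_real] at key
  have hQP : l2 (a + b) ^ 2 = l2 a ^ 2 + l2 b ^ 2 := l2_add_sq hab
  have hQM : l2 (a - b) ^ 2 = l2 a ^ 2 + l2 b ^ 2 := l2_sub_sq hab
  have hPn : (0:ℝ) ≤ ‖toE (Φ.mulVec a) + toE (Φ.mulVec b)‖ := norm_nonneg _
  have hMn : (0:ℝ) ≤ ‖toE (Φ.mulVec a) - toE (Φ.mulVec b)‖ := norm_nonneg _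
  have hl2P := l2_nonneg (a + b)
  have hl2M := l2_nonneg (a - b)
  have e3 : (1 + ε) * l2 (a + b) * ((1 + ε) * l2 (a + b))
      = (1 + ε) ^ 2 * (l2 a ^ 2 + l2 b ^ 2) := by rw [← hQP]; ring
  have e4 : (1 - ε) * l2 (a - b) * ((1 - ε) * l2 (a - b))
      = (1 - ε) ^ 2 * (l2 a ^ 2 + l2 b ^ 2) := by rw [← hQM]; ring
  have hP2 : ‖toE (Φ.mulVec a) + toE (Φ.mulVec b)‖ * ‖toE (Φ.mulVec a) + toE (Φ.mulVec b)‖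
      ≤ (1 + ε) ^ 2 * (l2 a ^ 2 + l2 b ^ 2) :=
    e3 ▸ mul_le_mul h1 h1 hPn (mul_nonneg (by linarith) hl2P)
  have hM2 : (1 - ε) ^ 2 * (l2 a ^ 2 + l2 b ^ 2)
      ≤ ‖toE (Φ.mulVec a) - toE (Φ.mulVec b)‖ * ‖toE (Φ.mulVec a) - toE (Φ.mulVec b)‖ :=
    e4 ▸ mul_le_mul h2 h2 (mul_nonneg (by linarith) hl2M) hMn
  rw [key]
  nlinarith [hP2, hM2]

lemma inner_le {m d s : ℕ} {ε : ℝ} (hε0 : 0 < ε) (hε1 : ε ≤ 1)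
    {Φ : Matrix (Fin m) (Fin d) ℝ} (hΦ : RIC Φ (2 * s) ε)
    {a b : Fin d → ℝ} (hab : ∀ i, a i * b i = 0)
    (hs : ({i | a i ≠ 0} ∪ {i | b i ≠ 0}).ncard ≤ 2 * s) :
    ⟪toE (Φ.mulVec a), toE (Φ.mulVec b)⟫ ≤ 2 * ε * l2 a * l2 b := by
  rcases (l2_nonneg a).eq_or_lt with ha | ha
  · have : a = 0 := l2_eq_zero ha.symm
    subst this
    rw [Matrix.mulVec_zero, toE_zero, inner_zero_left]
    have : l2 (0 : Fin d → ℝ) = 0 := by simpa using l2_smul 0 le_rfl (0 : Fin d → ℝ)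
    rw [this]
    nlinarith [l2_nonneg b]
  rcases (l2_nonneg b).eq_or_lt with hb | hb
  · have : b = 0 := l2_eq_zero hb.symm
    subst this
    rw [Matrix.mulVec_zero, toE_zero, inner_zero_right]
    have : l2 (0 : Fin d → ℝ) = 0 := by simpa using l2_smul 0 le_rfl (0 : Fin d → ℝ)
    rw [this]
    nlinarith [l2_nonneg a]
  set t : ℝ := l2 a / l2 b with htdef
  have ht : 0 < t := div_pos ha hb
  have hab' : ∀ i, a i * (t • b) i = 0 := fun i => by
    simp only [Pi.smul_apply, smul_eq_mul]; rw [mul_comm t, ← mul_assoc, hab i, zero_mul]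
  have hs' : ({i | a i ≠ 0} ∪ {i | (t • b) i ≠ 0}).ncard ≤ 2 * s := by
    refine le_trans (Set.ncard_le_ncard ?_ (Set.toFinite _)) hs
    refine Set.union_subset_union_right _ fun i hi => ?_
    simp only [Set.mem_setOf_eq, Pi.smul_apply, smul_eq_mul] at hi ⊢
    exact fun h => hi (by rw [h, mul_zero])
  have h := inner_le_part1 hε0 hε1 hΦ hab' hs'
  rw [Matrix.mulVec_smul, toE_smul, real_inner_smul_right, l2_smul t ht.le] at h
  have htb : t * l2 b = l2 a := div_mul_cancel₀ _ (ne_of_gt hb)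
  rw [htb] at h
  have e : t * (2 * ε * l2 a * l2 b) = ε * (l2 a ^ 2 + l2 a ^ 2) := by rw [← htb]; ring
  exact le_of_mul_le_mul_left (by rw [e]; exact h) ht
/-- **Approximation of the residual.** Under RIC `(2s, ε)`, for a nonzero
`s`-sparse `x` with `|supp(x) ∪ I| ≤ 2s`, setting `x₀ = x|_{supp(x)∖I}`, `u₀ = Φx₀`,
`F = range(Φ_I)` and `r = P_{F⊥}(Φx)`, we have `‖u₀ − r‖₂ ≤ 2.2 ε ‖u₀‖₂`. -/
theorem stmt4 (m d s : ℕ) (ε : ℝ) (hε0 : 0 < ε) (hε : ε ≤ 0.03)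
    (Φ : Matrix (Fin m) (Fin d) ℝ) (hΦ : RIC Φ (2 * s) ε)
    (x : Fin d → ℝ) (hx : Sparse s x) (hx0 : x ≠ 0)
    (I : Finset (Fin d)) (hI : ({i | x i ≠ 0} ∪ ↑I).ncard ≤ 2 * s) :
    ∀ u₀ r : EuclideanSpace ℝ (Fin m),
      u₀ = Φ.mulVec (fun i => if i ∈ I then 0 else x i) →
      r = ((Submodule.orthogonalProjection (colSpan Φ I)ᗮ
             (WithLp.toLp 2 (Φ.mulVec x) : EuclideanSpace ℝ (Fin m)) : (colSpan Φ I)ᗮ) :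
           EuclideanSpace ℝ (Fin m)) →
      ‖u₀ - r‖ ≤ 2.2 * ε * ‖u₀‖ := by
  intro u₀ r hu₀ hr
  obtain ⟨x₀, hx₀def⟩ : ∃ x₀ : Fin d → ℝ, x₀ = (fun i => if i ∈ I then 0 else x i) :=
    ⟨_, rfl⟩
  obtain ⟨x₁, hx₁def⟩ : ∃ x₁ : Fin d → ℝ, x₁ = (fun i => if i ∈ I then x i else 0) :=
    ⟨_, rfl⟩
  rw [← hx₀def] at hu₀
  have hu₀' : u₀ = toE (Φ.mulVec x₀) := by rw [← hu₀]; rfl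
  have hxsum : x = x₀ + x₁ := by
    funext i
    by_cases h : i ∈ I <;> simp [hx₀def, hx₁def, h]
  have hsplit : Φ.mulVec x = Φ.mulVec x₀ + Φ.mulVec x₁ := by
    conv_lhs => rw [hxsum]
    exact Matrix.mulVec_add Φ x₀ x₁
  have hmem1 : toE (Φ.mulVec x₁) ∈ colSpan Φ I :=
    mulVec_mem_colSpan Φ I x₁ (fun i hi => by simp [hx₁def, hi])
  have hproj1 : Submodule.orthogonalProjection (colSpan Φ I)ᗮ (toE (Φ.mulVec x₁)) = 0 :=
    Submodule.orthogonalProjectionOnto_apply_of_mem_orthogonal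
      (Submodule.le_orthogonal_orthogonal (colSpan Φ I) hmem1)
  have hr' : r = ((Submodule.orthogonalProjection (colSpan Φ I)ᗮ u₀ : (colSpan Φ I)ᗮ) :
      EuclideanSpace ℝ (Fin m)) := by
    rw [hr]
    have hx2 : (WithLp.toLp 2 (Φ.mulVec x) : EuclideanSpace ℝ (Fin m))
        = toE (Φ.mulVec x₀) + toE (Φ.mulVec x₁) := by
      show toE (Φ.mulVec x) = _
      rw [hsplit, toE_add]
    rw [hx2, map_add, hproj1, add_zero, hu₀']
  obtain ⟨y, hy⟩ : ∃ y : EuclideanSpace ℝ (Fin m),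
      y = ((Submodule.orthogonalProjection (colSpan Φ I) u₀ : colSpan Φ I) :
        EuclideanSpace ℝ (Fin m)) := ⟨_, rfl⟩
  have hdecomp := Submodule.starProjection_add_starProjection_orthogonal (K := colSpan Φ I) u₀
  rw [Submodule.starProjection_apply, Submodule.starProjection_apply] at hdecomp
  rw [← hy] at hdecomp
  have hur : u₀ - r = y := by rw [hr']; exact sub_eq_of_eq_add hdecomp.symm
  have huy : u₀ - y = ((Submodule.orthogonalProjection (colSpan Φ I)ᗮ u₀ : (colSpan Φ I)ᗮ) :
      EuclideanSpace ℝ (Fin m)) := by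
    exact sub_eq_of_eq_add' hdecomp.symm
  have hyF : y ∈ colSpan Φ I := by rw [hy]; exact SetLike.coe_mem _
  obtain ⟨w, hwI, hwy⟩ := exists_of_mem_colSpan Φ I hyF
  have hortho : ⟪y, u₀ - y⟫ = 0 := by
    have h1 : u₀ - y ∈ (colSpan Φ I)ᗮ := by rw [huy]; exact SetLike.coe_mem _
    exact (Submodule.mem_orthogonal (colSpan Φ I) _).mp h1 y hyF
  have hyn : ‖y‖ ^ 2 = ⟪u₀, y⟫ := by
    have e2 : y + (u₀ - y) = u₀ := by abel
    have h3 : ⟪u₀, y⟫ = ⟪y, y⟫ + ⟪u₀ - y, y⟫ := by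
      conv_lhs => rw [← e2, inner_add_left]
    rw [h3, real_inner_self_eq_norm_sq, real_inner_comm, hortho, add_zero]
  have hdisj : ∀ i, x₀ i * w i = 0 := fun i => by
    by_cases h : i ∈ I
    · simp [hx₀def, h]
    · simp [hwI i h]
  have hsupp : ({i | x₀ i ≠ 0} ∪ {i | w i ≠ 0}).ncard ≤ 2 * s := by
    refine le_trans (Set.ncard_le_ncard ?_ (Set.toFinite _)) hI
    rintro i (hi | hi)
    · left
      simp only [Set.mem_setOf_eq, hx₀def] at hi ⊢
      intro h; exact hi (by simp [h])
    · right
      simp only [Set.mem_setOf_eq] at hi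
      by_contra h
      exact hi (hwI i h)
  have hib := inner_le hε0 (by linarith) hΦ hdisj hsupp
  have hsx₀ : Sparse (2 * s) x₀ := by
    refine sparse_of_subset (fun i hi => Or.inl ?_) hI
    simp only [hx₀def] at hi
    intro h; exact hi (by simp [h])
  have hsw : Sparse (2 * s) w := by
    refine sparse_of_subset (fun i hi => Or.inr ?_) hI
    by_contra h
    exact hi (hwI i h)
  have hr1 := (hΦ x₀ hsx₀).1
  have hr2 := (hΦ w hsw).1
  rw [l2_eq_norm (Φ.mulVec x₀), ← hu₀'] at hr1
  rw [l2_eq_norm (Φ.mulVec w), hwy] at hr2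
  rw [hwy, ← hu₀'] at hib
  rw [← hyn] at hib
  rw [hur]
  rcases (norm_nonneg y).eq_or_lt with hY | hY
  · rw [← hY]
    positivity
  have hA := l2_nonneg x₀
  have hW := l2_nonneg w
  have hN := norm_nonneg u₀
  have hAW : (1 - ε) * l2 x₀ * ((1 - ε) * l2 w) ≤ ‖u₀‖ * ‖y‖ :=
    mul_le_mul hr1 hr2 (mul_nonneg (by linarith) hW) hN
  have h4 : (1 - ε) ^ 2 * ‖y‖ ^ 2 ≤ 2 * ε * (‖u₀‖ * ‖y‖) := by
    have hib2 : (1 - ε) ^ 2 * ‖y‖ ^ 2 ≤ (1 - ε) ^ 2 * (2 * ε * l2 x₀ * l2 w) :=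
      mul_le_mul_of_nonneg_left hib (sq_nonneg _)
    have hAW2 : 2 * ε * ((1 - ε) * l2 x₀ * ((1 - ε) * l2 w)) ≤ 2 * ε * (‖u₀‖ * ‖y‖) :=
      mul_le_mul_of_nonneg_left hAW (by linarith)
    have heq : (1 - ε) ^ 2 * (2 * ε * l2 x₀ * l2 w)
        = 2 * ε * ((1 - ε) * l2 x₀ * ((1 - ε) * l2 w)) := by ring
    linarith [hib2, hAW2]
  have h5 : (1 - ε) ^ 2 * ‖y‖ ≤ 2 * ε * ‖u₀‖ := by
    have h4' : ((1 - ε) ^ 2 * ‖y‖) * ‖y‖ ≤ (2 * ε * ‖u₀‖) * ‖y‖ := by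
      have e : ((1 - ε) ^ 2 * ‖y‖) * ‖y‖ = (1 - ε) ^ 2 * ‖y‖ ^ 2 := by ring
      have e' : (2 * ε * ‖u₀‖) * ‖y‖ = 2 * ε * (‖u₀‖ * ‖y‖) := by ring
      rw [e, e']; exact h4
    exact le_of_mul_le_mul_right h4' hY
  have hP : (0:ℝ) < (1 - ε) ^ 2 := pow_pos (by linarith) 2
  have h6 : ‖y‖ ≤ 2 * ε * ‖u₀‖ / (1 - ε) ^ 2 := (le_div_iff₀ hP).mpr (by linarith [h5])
  have hεN : 0 ≤ ε * ‖u₀‖ := mul_nonneg hε0.le hN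
  have p1 : ε * (ε * ‖u₀‖) ≤ 0.03 * (ε * ‖u₀‖) := mul_le_mul_of_nonneg_right hε hεN
  have p2 : 0 ≤ ε * (ε * (ε * ‖u₀‖)) := mul_nonneg hε0.le (mul_nonneg hε0.le hεN)
  have h7 : 2 * ε * ‖u₀‖ / (1 - ε) ^ 2 ≤ 2.2 * ε * ‖u₀‖ := by
    rw [div_le_iff₀ hP]
    linarith [hεN, p1, p2]
  exact h6.trans h7
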